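/- Guards lemma: Let e be a link with receiver r_e, and let L be a finite set of links such that every e' ∈ L satisfies d_{e'} ≤ d_{e'e} (where d_{e'} is the length of e' and d_{e'e} the distance from the transmitter of e' to r_e). Then there exists a set G of at most six receivers of links in L such that for every e' ∈ L there is g ∈ G with dist(s_{e'}, g) ≤ 2·d_{e'e}. -/

import Mathlib

open Complex Real

-- geometric core: small angle between v, w gives |v - w| ≤ max |v| |w|
lemma small_angle_dist (v w : ℂ) (h : |Complex.arg v - Complex.arg w| ≤ π / 3) :
    ‖v - w‖ ≤ max (‖v‖) (‖w‖) := by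
  rcases eq_or_ne v 0 with rfl | hv
  · simp
  rcases eq_or_ne w 0 with rfl | hw
  · simp
  set a := ‖v‖ with ha
  set b := ‖w‖ with hb
  have hv1 : v.re = a * Real.cos v.arg := by
    rw [Complex.cos_arg hv]; field_simp [norm_ne_zero_iff.mpr hv]; rfl
  have hv2 : v.im = a * Real.sin v.arg := by
    rw [Complex.sin_arg]; field_simp [norm_ne_zero_iff.mpr hv]; rfl
  have hw1 : w.re = b * Real.cos w.arg := by
    rw [Complex.cos_arg hw]; field_simp [norm_ne_zero_iff.mpr hw]; rfl
  have hw2 : w.im = b * Real.sin w.arg := by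
    rw [Complex.sin_arg]; field_simp [norm_ne_zero_iff.mpr hw]; rfl
  have hre : (v * (starRingEnd ℂ) w).re = a * b * Real.cos (arg v - arg w) := by
    simp only [Complex.mul_re, Complex.conj_re, Complex.conj_im, Real.cos_sub]
    rw [hv1, hv2, hw1, hw2]; ring
  have hcos : Real.cos (π / 3) ≤ Real.cos (arg v - arg w) := by
    rw [← Real.cos_abs (arg v - arg w)]
    apply Real.cos_le_cos_of_nonneg_of_le_pi (abs_nonneg _) (by nlinarith [Real.pi_pos]) h
  rw [Real.cos_pi_div_three] at hcos
  have hns : Complex.normSq (v - w) = a^2 + b^2 - 2 * (a * b * Real.cos (arg v - arg w)) := by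
    rw [Complex.normSq_sub, hre, Complex.sq_norm, Complex.sq_norm]
  have ha0 : 0 ≤ a := norm_nonneg v
  have hb0 : 0 ≤ b := norm_nonneg w
  have key : (‖v - w‖)^2 ≤ (max a b)^2 := by
    rw [Complex.sq_norm, hns]
    rcases le_total a b with hab | hab
    · rw [max_eq_right hab]
      nlinarith [mul_le_mul_of_nonneg_left hcos (mul_nonneg ha0 hb0), mul_le_mul_of_nonneg_left hab ha0]
    · rw [max_eq_left hab]
      nlinarith [mul_le_mul_of_nonneg_left hcos (mul_nonneg ha0 hb0), mul_le_mul_of_nonneg_left hab hb0]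
  have h1 : 0 ≤ ‖v - w‖ := norm_nonneg _
  have h2 : 0 ≤ max a b := le_max_of_le_left ha0
  nlinarith

lemma key_close (x y : ℝ) (h : (⌈x / (π/3)⌉ : ℤ) = ⌈y / (π/3)⌉) : |x - y| ≤ π / 3 := by
  have hpi : (0:ℝ) < π / 3 := by positivity
  have h1 : x / (π/3) ≤ ⌈x / (π/3)⌉ := Int.le_ceil _
  have h2 : y / (π/3) ≤ ⌈y / (π/3)⌉ := Int.le_ceil _
  have h3 : (⌈x / (π/3)⌉ : ℝ) - 1 < x / (π/3) := by
    have := Int.ceil_lt_add_one (x / (π/3)); linarith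
  have h4 : (⌈y / (π/3)⌉ : ℝ) - 1 < y / (π/3) := by
    have := Int.ceil_lt_add_one (y / (π/3)); linarith
  rw [h] at h1 h3
  have hxp : x = (x/(π/3)) * (π/3) := (div_mul_cancel₀ x hpi.ne').symm
  have hyp : y = (y/(π/3)) * (π/3) := (div_mul_cancel₀ y hpi.ne').symm
  rw [abs_le]
  constructor <;> nlinarith [mul_le_mul_of_nonneg_right (show x/(π/3) - y/(π/3) ≤ 1 by linarith) hpi.le, mul_le_mul_of_nonneg_right (show y/(π/3) - x/(π/3) ≤ 1 by linarith) hpi.le]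

theorem guards_lemma {ι : Type*} [DecidableEq ι]
    (L : Finset ι)
    (s r : ι → EuclideanSpace ℝ (Fin 2))
    (re : EuclideanSpace ℝ (Fin 2))
    (hshort : ∀ e' ∈ L, dist (s e') (r e') ≤ dist (s e') re) :
    ∃ G : Finset (EuclideanSpace ℝ (Fin 2)),
      G.card ≤ 6 ∧
      (∀ g ∈ G, ∃ e' ∈ L, g = r e') ∧
      (∀ e' ∈ L, ∃ g ∈ G, dist (s e') g ≤ 2 * dist (s e') re) := by
  classical
  set f : EuclideanSpace ℝ (Fin 2) ≃ₗᵢ[ℝ] ℂ := Complex.orthonormalBasisOneI.repr.symm with hf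
  have hpi : (0:ℝ) < π / 3 := by positivity
  set key : ι → ℤ := fun e' => ⌈((f (s e') - f re).arg + π) / (π/3)⌉ with hkey
  have hkmem : ∀ e', key e' ∈ Finset.Icc (1:ℤ) 6 := by
    intro e'
    have h1 := Complex.neg_pi_lt_arg (f (s e') - f re)
    have h2 := Complex.arg_le_pi (f (s e') - f re)
    rw [Finset.mem_Icc]
    constructor
    · simp only [hkey]
      have := Int.ceil_pos.mpr (div_pos (by linarith : (0:ℝ) < (f (s e') - f re).arg + π) hpi)
      omega
    · simp only [hkey]
      apply Int.ceil_le.mpr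
      rw [div_le_iff₀ hpi]
      push_cast
      nlinarith
  -- distances via f
  have hdistf : ∀ x y : EuclideanSpace ℝ (Fin 2),
      dist x y = ‖(f x - f re) - (f y - f re)‖ := by
    intro x y
    rw [← f.dist_map x y, Complex.dist_eq]
    ring_nf
  have hdistre : ∀ x : EuclideanSpace ℝ (Fin 2),
      dist x re = ‖f x - f re‖ := by
    intro x
    rw [← f.dist_map x re, Complex.dist_eq]
  set K := L.image key with hK
  have hmin : ∀ j ∈ K, ∃ m ∈ L.filter (fun e' => key e' = j),
      ∀ b ∈ L.filter (fun e' => key e' = j), dist (s m) re ≤ dist (s b) re := by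
    intro j hj
    obtain ⟨e', he', hke⟩ := Finset.mem_image.mp hj
    exact Finset.exists_min_image _ (fun e' => dist (s e') re)
      ⟨e', Finset.mem_filter.mpr ⟨he', hke⟩⟩
  choose m hm1 hm2 using hmin
  refine ⟨K.attach.image (fun j => r (m j.1 j.2)), ?_, ?_, ?_⟩
  · calc (K.attach.image (fun j => r (m j.1 j.2))).card
        ≤ K.attach.card := Finset.card_image_le
      _ = K.card := Finset.card_attach
      _ ≤ (Finset.Icc (1:ℤ) 6).card := by
          apply Finset.card_le_card
          intro j hj
          obtain ⟨e', _, hke⟩ := Finset.mem_image.mp hj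
          exact hke ▸ hkmem e'
      _ = 6 := by decide
  · intro g hg
    obtain ⟨j, _, hj⟩ := Finset.mem_image.mp hg
    exact ⟨m j.1 j.2, Finset.mem_of_mem_filter _ (hm1 j.1 j.2), hj.symm⟩
  · intro e' he'
    have hjK : key e' ∈ K := Finset.mem_image_of_mem key he'
    set j : {x // x ∈ K} := ⟨key e', hjK⟩ with hjdef
    set ej := m j.1 j.2 with hej
    have hejL : ej ∈ L := Finset.mem_of_mem_filter _ (hm1 j.1 j.2)
    have hejkey : key ej = key e' := (Finset.mem_filter.mp (hm1 j.1 j.2)).2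
    have hejmin : dist (s ej) re ≤ dist (s e') re :=
      hm2 j.1 j.2 e' (Finset.mem_filter.mpr ⟨he', rfl⟩)
    refine ⟨r ej, Finset.mem_image_of_mem _ (Finset.mem_attach K j), ?_⟩
    set v := f (s e') - f re with hv
    set w := f (s ej) - f re with hw
    have hang : |v.arg - w.arg| ≤ π / 3 := by
      have : (⌈(v.arg + π) / (π/3)⌉ : ℤ) = ⌈(w.arg + π) / (π/3)⌉ := hejkey.symm
      have := key_close (v.arg + π) (w.arg + π) this
      simpa using this
    have hvw : ‖v - w‖ ≤ max (‖v‖) (‖w‖) :=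
      small_angle_dist v w hang
    have h1 : dist (s e') (s ej) ≤ dist (s e') re := by
      rw [hdistf (s e') (s ej), hdistre (s e')]
      calc ‖v - w‖ ≤ max (‖v‖) (‖w‖) := hvw
        _ ≤ ‖v‖ := by
            apply max_le le_rfl
            rw [← hdistre (s e'), ← hdistre (s ej)] at *
            exact hejmin
    have h2 : dist (s ej) (r ej) ≤ dist (s ej) re := hshort ej hejL
    calc dist (s e') (r ej) ≤ dist (s e') (s ej) + dist (s ej) (r ej) := dist_triangle _ _ _
      _ ≤ dist (s e') re + dist (s ej) re := add_le_add h1 h2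
      _ ≤ 2 * dist (s e') re := by linarith [hejmin]
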